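/- Let p be a prime, q = p^m, and n a positive integer. Let Γ_n be the kernel of the group homomorphism GL_n(F_q[[t]]) → GL_n(F_q) induced by the constant-coefficient ring homomorphism F_q[[t]] → F_q (t ↦ 0). Then every finite subgroup of Γ_n is a p-group; equivalently, every element of Γ_n of finite order has order a power of p. -/

import Mathlib

open PowerSeries Finset

private lemma dvd_mul_entries {Fq : Type} [Field Fq] {n : ℕ} {g : PowerSeries Fq}
    {A : Matrix (Fin n) (Fin n) (PowerSeries Fq)}
    (hA : ∀ i j, g ∣ A i j) (B : Matrix (Fin n) (Fin n) (PowerSeries Fq)) :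
    ∀ i j, g ∣ (A * B) i j := by
  intro i j
  rw [Matrix.mul_apply]
  exact Finset.dvd_sum fun c _ => (hA i c).mul_right _

private lemma dvd_mul_entries2 {Fq : Type} [Field Fq] {n : ℕ} {g h : PowerSeries Fq}
    {A B : Matrix (Fin n) (Fin n) (PowerSeries Fq)}
    (hA : ∀ i j, g ∣ A i j) (hB : ∀ i j, h ∣ B i j) :
    ∀ i j, g * h ∣ (A * B) i j := by
  intro i j
  rw [Matrix.mul_apply]
  exact Finset.dvd_sum fun c _ => mul_dvd_mul (hA i c) (hB c j)

private lemma key_eq_one {p : ℕ} (hp : p.Prime) {Fq : Type} [Field Fq] [CharP Fq p]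
    {n ℓ : ℕ} (hℓ : 0 < ℓ) (hcop : ¬ p ∣ ℓ)
    {M : Matrix (Fin n) (Fin n) (PowerSeries Fq)}
    (hM1 : ∀ i j, (X : PowerSeries Fq) ∣ M i j)
    (hpow : (1 + M) ^ ℓ = 1) : M = 0 := by
  have hunit : IsUnit ((ℓ : PowerSeries Fq)) := by
    rw [PowerSeries.isUnit_iff_constantCoeff, map_natCast]
    refine isUnit_iff_ne_zero.mpr ?_
    rw [Ne, CharP.cast_eq_zero_iff Fq p ℓ]
    exact hcop
  have main : ∀ k : ℕ, ∀ i j, (X : PowerSeries Fq) ^ k ∣ M i j := by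
    intro k
    induction k with
    | zero => intro i j; simpa using one_dvd _
    | succ k ih =>
      rcases Nat.eq_zero_or_pos k with rfl | hk
      · simpa using hM1
      · have hbin : (1 : Matrix (Fin n) (Fin n) (PowerSeries Fq)) =
            ∑ s ∈ Finset.range (ℓ + 1),
              M ^ s * (ℓ.choose s : Matrix (Fin n) (Fin n) (PowerSeries Fq)) := by
          rw [← hpow, add_comm, (Commute.one_right M).add_pow]
          simp
        have hsplit : ∑ s ∈ Finset.range (ℓ + 1),
              M ^ s * (ℓ.choose s : Matrix (Fin n) (Fin n) (PowerSeries Fq)) =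
            (1 + ℓ • M) +
            ∑ s ∈ Finset.Ico 2 (ℓ + 1),
              M ^ s * (ℓ.choose s : Matrix (Fin n) (Fin n) (PowerSeries Fq)) := by
          rw [Finset.range_eq_Ico,
            ← Finset.sum_Ico_consecutive _ (by omega : 0 ≤ 2) (by omega : 2 ≤ ℓ + 1)]
          congr 1
          rw [show Finset.Ico 0 2 = ({0, 1} : Finset ℕ) from rfl,
            Finset.sum_insert (by decide), Finset.sum_singleton]
          simp [(Nat.cast_commute ℓ M).eq, nsmul_eq_mul]
        have h0 : ℓ • M +
            ∑ s ∈ Finset.Ico 2 (ℓ + 1),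
              M ^ s * (ℓ.choose s : Matrix (Fin n) (Fin n) (PowerSeries Fq)) = 0 := by
          have h := hbin.trans hsplit
          rw [add_assoc, left_eq_add] at h
          exact h
        have heq : ℓ • M =
            - ∑ s ∈ Finset.Ico 2 (ℓ + 1),
              M ^ s * (ℓ.choose s : Matrix (Fin n) (Fin n) (PowerSeries Fq)) :=
          eq_neg_of_add_eq_zero_left h0
        -- each term of the sum has entries divisible by X^(k+1+1)... we need X^(k+1)
        have hterm : ∀ s ∈ Finset.Ico 2 (ℓ + 1), ∀ i j,
            (X : PowerSeries Fq) ^ (k + 1) ∣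
              (M ^ s * (ℓ.choose s : Matrix (Fin n) (Fin n) (PowerSeries Fq))) i j := by
          intro s hs i j
          rw [Finset.mem_Ico] at hs
          have hM2 : ∀ i j, (X : PowerSeries Fq) ^ (k + 1) ∣ (M * M) i j := by
            intro i j
            have := dvd_mul_entries2 ih ih i j
            refine dvd_trans ?_ this
            rw [← pow_add]
            exact pow_dvd_pow _ (by omega)
          have hrw : M ^ s * (ℓ.choose s : Matrix (Fin n) (Fin n) (PowerSeries Fq)) =
              (M * M) * (M ^ (s - 2) * (ℓ.choose s : Matrix (Fin n) (Fin n) (PowerSeries Fq))) := by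
            rw [← mul_assoc, ← pow_two, ← pow_add]
            congr 2
            omega
          rw [hrw]
          exact dvd_mul_entries hM2 _ i j
        intro i j
        have hdvd : (X : PowerSeries Fq) ^ (k + 1) ∣ (ℓ • M) i j := by
          rw [heq, Matrix.neg_apply, Matrix.sum_apply]
          exact (Finset.dvd_sum (fun s hs => hterm s hs i j)).neg_right
        have hentry : (ℓ • M) i j = (ℓ : PowerSeries Fq) * M i j := by
          simp [nsmul_eq_mul]
        rw [hentry] at hdvd
        exact (IsUnit.dvd_mul_left hunit).mp hdvd
  ext i j d
  have := main (d + 1) i j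
  rw [PowerSeries.X_pow_dvd_iff] at this
  simpa using this d (by omega)

private lemma finOrder_eq_one {p : ℕ} (hp : p.Prime) {Fq : Type} [Field Fq] [CharP Fq p]
    {n : ℕ} (y : GL (Fin n) (PowerSeries Fq))
    (hy : y ∈ (Matrix.GeneralLinearGroup.map (n := Fin n) (PowerSeries.constantCoeff (R := Fq))).ker)
    {ℓ : ℕ} (hℓ : 0 < ℓ) (hcop : ¬ p ∣ ℓ) (hpow : y ^ ℓ = 1) : y = 1 := by
  set M : Matrix (Fin n) (Fin n) (PowerSeries Fq) := (y : Matrix (Fin n) (Fin n) (PowerSeries Fq)) - 1 with hM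
  have hM1 : ∀ i j, (X : PowerSeries Fq) ∣ M i j := by
    intro i j
    rw [PowerSeries.X_dvd_iff]
    have h1 : Matrix.GeneralLinearGroup.map (n := Fin n) (PowerSeries.constantCoeff (R := Fq)) y = 1 := hy
    have h2 : (PowerSeries.constantCoeff (R := Fq)) (y.val i j) = (1 : Matrix (Fin n) (Fin n) Fq) i j := by
      rw [← Matrix.GeneralLinearGroup.map_apply, h1]
      rfl
    have h3 : (PowerSeries.constantCoeff (R := Fq)) ((1 : Matrix (Fin n) (Fin n) (PowerSeries Fq)) i j)
        = (1 : Matrix (Fin n) (Fin n) Fq) i j := by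
      by_cases h : i = j <;> simp [Matrix.one_apply, h]
    rw [hM]
    simp only [Matrix.sub_apply, map_sub, h2, h3, sub_self]
  have hpow' : ((1 : Matrix (Fin n) (Fin n) (PowerSeries Fq)) + M) ^ ℓ = 1 := by
    have : (1 : Matrix (Fin n) (Fin n) (PowerSeries Fq)) + M = y.val := by
      rw [hM]; abel
    rw [this, ← Units.val_pow_eq_pow_val, hpow, Units.val_one]
  have hM0 := key_eq_one hp hℓ hcop hM1 hpow'
  have : y.val = 1 := by
    have := sub_eq_zero.mp hM0
    simpa using this
  exact Units.ext this

theorem kernel_GL_powerSeries_to_GL_residue_isPGroup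
    (p m : ℕ) (hp : p.Prime) (hm : 0 < m)
    (Fq : Type) [Field Fq] [Fintype Fq] (hq : Fintype.card Fq = p ^ m)
    (n : ℕ) (hn : 0 < n) :
    (∀ H : Subgroup (GL (Fin n) (PowerSeries Fq)),
      H ≤ (Matrix.GeneralLinearGroup.map (n := Fin n) (PowerSeries.constantCoeff (R := Fq))).ker →
      Finite H → IsPGroup p H) ∧
    (∀ x : GL (Fin n) (PowerSeries Fq),
      x ∈ (Matrix.GeneralLinearGroup.map (n := Fin n) (PowerSeries.constantCoeff (R := Fq))).ker →
      IsOfFinOrder x → ∃ k : ℕ, orderOf x = p ^ k) := by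
  have hcharP : CharP Fq p := by
    rw [CharP.charP_iff_prime_eq_zero hp]
    have h1 : ((Fintype.card Fq : Fq)) = 0 := FiniteField.cast_card_eq_zero Fq
    rw [hq] at h1
    push_cast at h1
    exact pow_eq_zero_iff hm.ne' |>.mp h1
  have part2 : ∀ x : GL (Fin n) (PowerSeries Fq),
      x ∈ (Matrix.GeneralLinearGroup.map (n := Fin n) (PowerSeries.constantCoeff (R := Fq))).ker →
      IsOfFinOrder x → ∃ k : ℕ, orderOf x = p ^ k := by
    intro x hx hfin
    set N := orderOf x with hN
    have hN0 : N ≠ 0 := hfin.orderOf_pos.ne'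
    set k := N.factorization p with hk
    set ℓ := N / p ^ k with hℓdef
    have hfac : p ^ k * ℓ = N := Nat.ordProj_mul_ordCompl_eq_self N p
    have hℓpos : 0 < ℓ := Nat.ordCompl_pos p hN0
    have hcop : ¬ p ∣ ℓ := hp.coprime_iff_not_dvd.mp (Nat.coprime_ordCompl hp hN0)
    set y := x ^ (p ^ k) with hy
    have hyker : y ∈ (Matrix.GeneralLinearGroup.map (n := Fin n) (PowerSeries.constantCoeff (R := Fq))).ker :=
      Subgroup.pow_mem _ hx _
    have horder : orderOf y = ℓ := by
      rw [hy, orderOf_pow_of_dvd (pow_ne_zero _ hp.pos.ne') (show p ^ k ∣ orderOf x from hN ▸ ⟨ℓ, hfac.symm⟩), ← hN]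
    have hpow : y ^ ℓ = 1 := by
      rw [← horder]; exact pow_orderOf_eq_one y
    have hy1 : y = 1 := finOrder_eq_one hp y hyker hℓpos hcop hpow
    have hℓ1 : ℓ = 1 := by
      rw [← horder, hy1, orderOf_one]
    refine ⟨k, ?_⟩
    rw [← hfac, hℓ1, mul_one]
  refine ⟨?_, part2⟩
  intro H hH hHfin
  intro g
  have hgfin : IsOfFinOrder (g : GL (Fin n) (PowerSeries Fq)) := by
    have : IsOfFinOrder g := isOfFinOrder_of_finite g
    exact H.subtype.isOfFinOrder this
  obtain ⟨k, hk⟩ := part2 g (hH g.2) hgfin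
  refine ⟨k, ?_⟩
  have h1 : (g : GL (Fin n) (PowerSeries Fq)) ^ p ^ k = 1 := by
    rw [← hk]; exact pow_orderOf_eq_one _
  refine Subtype.ext ?_
  push_cast
  exact h1
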